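/- In the simplex category Δ, for every n ≥ 1 the object [n] is the colimit of its spine: the zigzag diagram with n copies of [1] and n−1 copies of [0], where the k-th copy of [0] maps to the k-th copy of [1] via δ₀ and to the (k+1)-st copy of [1] via δ₁, and the colimit cocone sends the k-th copy of [1] to [n] via the monotone injection with image {k−1, k} (for 1 ≤ k ≤ n). -/

import Mathlib

open CategoryTheory Limits

/-- The index for the spine (zigzag) diagram of `[n+1]`: `n+1` copies of the interval
`[1]` (indexed by `Fin (n+1)`) and `n` copies of the point `[0]` (indexed by `Fin n`),
where the `k`-th copy of `[0]` maps to the `k`-th copy of `[1]` via `δ₀` and to the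
`(k+1)`-st copy of `[1]` via `δ₁`. -/
def spineIndex (n : ℕ) :
    MultispanIndex ⟨Fin n, Fin (n + 1), fun k => k.castSucc, fun k => k.succ⟩ SimplexCategory where
  left _ := SimplexCategory.mk 0
  right _ := SimplexCategory.mk 1
  fst _ := SimplexCategory.δ 0
  snd _ := SimplexCategory.δ 1

/-- The spine cocone on `[n+1]`: the leg at the `k`-th copy of `[1]` is the monotone
injection `[1] → [n+1]` with image `{k, k+1}`. -/
def spineCocone (n : ℕ) : Multicofork (spineIndex n) :=
  Multicofork.ofπ (spineIndex n) (SimplexCategory.mk (n + 1))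
    (fun k => SimplexCategory.mkOfSucc k)
    (by
      intro k
      show SimplexCategory.δ 0 ≫ SimplexCategory.mkOfSucc k.castSucc =
        SimplexCategory.δ 1 ≫ SimplexCategory.mkOfSucc k.succ
      rw [SimplexCategory.eq_const_of_zero (SimplexCategory.δ 0 ≫ _),
        SimplexCategory.eq_const_of_zero (SimplexCategory.δ 1 ≫ _)]
      congr 1)


lemma spine_compat {n : ℕ} (E : Multicofork (spineIndex n)) (k : Fin n) :
    (E.π k.castSucc).toOrderHom 1 = (E.π k.succ).toOrderHom 0 := by
  have h := E.condition k
  have h0 := congrArg (fun f => SimplexCategory.Hom.toOrderHom f (0 : Fin 1)) h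
  simp [SimplexCategory.comp_toOrderHom, spineIndex, SimplexCategory.δ,
    Fin.succAbove] at h0 ⊢
  exact h0

/-- The underlying function of the descended map. -/
def spineDescFun {n : ℕ} (E : Multicofork (spineIndex n)) :
    Fin (n + 2) → Fin (E.pt.len + 1) :=
  Fin.cases ((E.π (0 : Fin (n + 1))).toOrderHom 0) (fun j => (E.π j).toOrderHom 1)

lemma spineDescFun_castSucc {n : ℕ} (E : Multicofork (spineIndex n)) (k : Fin (n + 1)) :
    spineDescFun E k.castSucc = (E.π k).toOrderHom 0 := by
  induction k using Fin.cases with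
  | zero => simp [spineDescFun]
  | succ j =>
      rw [← Fin.succ_castSucc]
      simpa [spineDescFun] using spine_compat E j

lemma spineDescFun_succ {n : ℕ} (E : Multicofork (spineIndex n)) (k : Fin (n + 1)) :
    spineDescFun E k.succ = (E.π k).toOrderHom 1 := by
  simp [spineDescFun]

lemma spineDescFun_monotone {n : ℕ} (E : Multicofork (spineIndex n)) :
    Monotone (spineDescFun E) := by
  rw [Fin.monotone_iff_le_succ]
  intro k
  rw [spineDescFun_castSucc, spineDescFun_succ]
  exact (E.π k).toOrderHom.monotone (show (0 : Fin 2) ≤ 1 by decide)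

/-- The descended map out of `[n+1]`. -/
def spineDesc {n : ℕ} (E : Multicofork (spineIndex n)) :
    SimplexCategory.mk (n + 1) ⟶ E.pt :=
  SimplexCategory.Hom.mk ⟨spineDescFun E, spineDescFun_monotone E⟩

lemma spine_fac {n : ℕ} (E : Multicofork (spineIndex n)) (k : Fin (n + 1)) :
    SimplexCategory.mkOfSucc k ≫ spineDesc E = E.π k := by
  apply SimplexCategory.Hom.ext_one_left
  · exact spineDescFun_castSucc E k
  · exact spineDescFun_succ E k

lemma spine_uniq {n : ℕ} (E : Multicofork (spineIndex n))
    (m : SimplexCategory.mk (n + 1) ⟶ E.pt)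
    (hm : ∀ k : Fin (n + 1), SimplexCategory.mkOfSucc k ≫ m = E.π k) :
    m = spineDesc E := by
  refine SimplexCategory.Hom.ext _ _ (OrderHom.ext _ _ (funext fun i => ?_))
  show m.toOrderHom i = spineDescFun E i
  induction i using Fin.cases with
  | zero =>
      have h0 := congrArg (fun f => SimplexCategory.Hom.toOrderHom f (0 : Fin 2))
        (hm (0 : Fin (n + 1)))
      simp [SimplexCategory.comp_toOrderHom, spineDescFun,
        SimplexCategory.mkOfSucc_homToOrderHom_zero] at h0 ⊢
      exact h0
  | succ j =>
      have h1 := congrArg (fun f => SimplexCategory.Hom.toOrderHom f (1 : Fin 2)) (hm j)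
      rw [spineDescFun_succ]
      simp [SimplexCategory.comp_toOrderHom,
        SimplexCategory.mkOfSucc_homToOrderHom_one] at h1 ⊢
      exact h1

/-- In the simplex category `Δ`, for every `n ≥ 1` the object `[n]` is
the colimit of its spine: the zigzag diagram with `n` copies of `[1]` and `n−1` copies
of `[0]`, where the `k`-th copy of `[0]` maps to the `k`-th copy of `[1]` via `δ₀` and
to the `(k+1)`-st copy of `[1]` via `δ₁`, and the colimit cocone sends the `k`-th copy
of `[1]` to `[n]` via the monotone injection with image `{k−1, k}` (for `1 ≤ k ≤ n`).
(Here `[n]` is written `[m+1]` with `m ≥ 0`, and the copies are `0`-indexed.) -/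
theorem spine_isColimit (n : ℕ) : Nonempty (IsColimit (spineCocone n)) :=
  ⟨Multicofork.IsColimit.mk _ (fun E => spineDesc E)
    (fun E k => spine_fac E k)
    (fun E m hm => spine_uniq E m hm)⟩
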